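/- Every equilateral set in a finite-dimensional normed space is antipodal: if S is a set of points in an n-dimensional normed space with all pairwise distances equal to λ > 0, then for any two distinct x, y ∈ S, the point x − y lies on the boundary of the convex hull of S − S. -/
import Mathlib

open Pointwise

/-- Every equilateral set in a finite-dimensional normed space is antipodal:
each difference `x - y` of distinct points of `S` lies on the boundary of
the convex hull of `S - S`. -/
theorem equilateral_antipodal {E : Type*} [NormedAddCommGroup E] [NormedSpace ℝ E]
    [FiniteDimensional ℝ E] (S : Set E) (lam : ℝ) (hlam : 0 < lam)
    (heq : ∀ x ∈ S, ∀ y ∈ S, x ≠ y → ‖x - y‖ = lam) :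
    ∀ x ∈ S, ∀ y ∈ S, x ≠ y → x - y ∈ frontier (convexHull ℝ (S - S)) := by
  intro x hx y hy hxy
  have hsub : S - S ⊆ Metric.closedBall (0 : E) lam := by
    rintro z ⟨a, ha, b, hb, rfl⟩
    simp only [Metric.mem_closedBall, dist_zero_right]
    rcases eq_or_ne a b with rfl | hab
    · simp [hlam.le]
    · exact (heq a ha b hb hab).le
  have hhull : convexHull ℝ (S - S) ⊆ Metric.closedBall (0 : E) lam :=
    convexHull_min hsub (convex_closedBall _ _)
  constructor
  · exact subset_closure (subset_convexHull ℝ _ (Set.sub_mem_sub hx hy))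
  · intro h
    have := interior_mono hhull h
    rw [interior_closedBall _ hlam.ne'] at this
    rw [Metric.mem_ball, dist_zero_right, heq x hx y hy hxy] at this
    exact lt_irrefl _ this
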